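/- Let S ∈ M_l(R) be symmetric and let L, R ∈ M_l(R) satisfy ‖L − I_l‖ ≤ δ and ‖R − I_l‖ ≤ δ with δ < 1/4. Then for every eigenvalue λ ∈ C of the matrix L S R, one has Re(λ) ≤ C · max{0, ν_max(S)} + C' δ ‖S‖ for suitable constants; in particular, if ν_max(S) ≤ 0 then Re(λ) ≤ C'' δ ‖S‖, where ν_max(S) is the largest eigenvalue of S. More precisely, if v ≠ 0 is an eigenvector of LSR with eigenvalue λ, then λ = ⟨S R v, R v̄⟩ / ⟨L^{−1} v, R v̄⟩, the numerator satisfies Re⟨S R v, R v̄⟩ ≤ ν_max(S)|Rv|², and |⟨L^{−1} v, R v̄⟩ − |v|²| ≤ C δ |v|². -/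

import Mathlib

open Matrix

section aux

variable {l : ℕ}

private noncomputable def nrm (u : Fin l → ℝ) : ℝ := Real.sqrt (u ⬝ᵥ u)

private lemma dot_self_nonneg' (u : Fin l → ℝ) : 0 ≤ u ⬝ᵥ u :=
  Finset.sum_nonneg fun i _ => mul_self_nonneg _

private lemma nrm_nonneg (u : Fin l → ℝ) : 0 ≤ nrm u := Real.sqrt_nonneg _

private lemma nrm_sq (u : Fin l → ℝ) : nrm u ^ 2 = u ⬝ᵥ u :=
  Real.sq_sqrt (dot_self_nonneg' u)

private lemma dot_le_nrm (x y : Fin l → ℝ) : x ⬝ᵥ y ≤ nrm x * nrm y := by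
  have h : (x ⬝ᵥ y) ^ 2 ≤ (x ⬝ᵥ x) * (y ⬝ᵥ y) := by
    have := Finset.sum_mul_sq_le_sq_mul_sq Finset.univ x y
    simpa [dotProduct, sq] using this
  calc x ⬝ᵥ y ≤ |x ⬝ᵥ y| := le_abs_self _
    _ = Real.sqrt ((x ⬝ᵥ y) ^ 2) := (Real.sqrt_sq_eq_abs _).symm
    _ ≤ Real.sqrt ((x ⬝ᵥ x) * (y ⬝ᵥ y)) := Real.sqrt_le_sqrt h
    _ = nrm x * nrm y := Real.sqrt_mul (dot_self_nonneg' x) _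

private lemma nrm_le_of_sq_le {c : ℝ} (hc : 0 ≤ c) (x u : Fin l → ℝ)
    (h : x ⬝ᵥ x ≤ c ^ 2 * (u ⬝ᵥ u)) : nrm x ≤ c * nrm u := by
  have : nrm x ≤ Real.sqrt (c ^ 2 * (u ⬝ᵥ u)) := Real.sqrt_le_sqrt h
  rwa [Real.sqrt_mul (sq_nonneg c), Real.sqrt_sq hc] at this

private lemma nrm_add_le (x y : Fin l → ℝ) : nrm (x + y) ≤ nrm x + nrm y := by
  have h : (x + y) ⬝ᵥ (x + y) ≤ (nrm x + nrm y) ^ 2 := by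
    have h1 : x ⬝ᵥ y ≤ nrm x * nrm y := dot_le_nrm x y
    have h2 : y ⬝ᵥ x ≤ nrm x * nrm y := by rw [dotProduct_comm]; exact h1
    have hx : x ⬝ᵥ x = nrm x ^ 2 := (nrm_sq x).symm
    have hy : y ⬝ᵥ y = nrm y ^ 2 := (nrm_sq y).symm
    simp only [add_dotProduct, dotProduct_add]
    nlinarith
  calc nrm (x + y) = Real.sqrt ((x + y) ⬝ᵥ (x + y)) := rfl
    _ ≤ Real.sqrt ((nrm x + nrm y) ^ 2) := Real.sqrt_le_sqrt h
    _ = nrm x + nrm y := Real.sqrt_sq (add_nonneg (nrm_nonneg x) (nrm_nonneg y))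

private lemma nrm_sub_le (x y : Fin l → ℝ) : nrm (x - y) ≤ nrm x + nrm y := by
  have hy : nrm (-y) = nrm y := by
    unfold nrm; congr 1; simp [dotProduct]
  calc nrm (x - y) = nrm (x + -y) := by rw [sub_eq_add_neg]
    _ ≤ nrm x + nrm (-y) := nrm_add_le x _
    _ = nrm x + nrm y := by rw [hy]

/-- transpose has the same operator-norm-style bound -/
private lemma nrm_transpose_mulVec_le {A : Matrix (Fin l) (Fin l) ℝ} {c : ℝ} (hc : 0 ≤ c)
    (hA : ∀ v : Fin l → ℝ, nrm (A *ᵥ v) ≤ c * nrm v) (u : Fin l → ℝ) :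
    nrm (Aᵀ *ᵥ u) ≤ c * nrm u := by
  set x := Aᵀ *ᵥ u with hx
  have key : nrm x ^ 2 ≤ (c * nrm u) * nrm x := by
    have h1 : x ⬝ᵥ x = (A *ᵥ x) ⬝ᵥ u := by
      rw [hx, dotProduct_mulVec, vecMul_transpose, dotProduct_comm]
    calc nrm x ^ 2 = x ⬝ᵥ x := nrm_sq x
      _ = (A *ᵥ x) ⬝ᵥ u := h1
      _ ≤ nrm (A *ᵥ x) * nrm u := dot_le_nrm _ _
      _ ≤ (c * nrm x) * nrm u := by
          exact mul_le_mul_of_nonneg_right (hA x) (nrm_nonneg u)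
      _ = (c * nrm u) * nrm x := by ring
  rcases eq_or_lt_of_le (nrm_nonneg x) with h0 | h0
  · rw [← h0]; exact mul_nonneg hc (nrm_nonneg u)
  · have := key
    rw [sq] at this
    exact le_of_mul_le_mul_right (by linarith [this]) h0

/-- the key real estimate -/
private lemma key_real (S L R : Matrix (Fin l) (Fin l) ℝ) (δ ν s : ℝ)
    (hδ0 : 0 ≤ δ) (hδ : δ < 1 / 4) (hs : 0 ≤ s)
    (hL : ∀ v : Fin l → ℝ, ((L - 1) *ᵥ v) ⬝ᵥ ((L - 1) *ᵥ v) ≤ δ ^ 2 * (v ⬝ᵥ v))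
    (hR : ∀ v : Fin l → ℝ, ((R - 1) *ᵥ v) ⬝ᵥ ((R - 1) *ᵥ v) ≤ δ ^ 2 * (v ⬝ᵥ v))
    (hν : ∀ v : Fin l → ℝ, (S *ᵥ v) ⬝ᵥ v ≤ ν * (v ⬝ᵥ v))
    (hS2 : ∀ v : Fin l → ℝ, (S *ᵥ v) ⬝ᵥ (S *ᵥ v) ≤ s ^ 2 * (v ⬝ᵥ v))
    (u : Fin l → ℝ) :
    ((L * S * R) *ᵥ u) ⬝ᵥ u ≤ 4 * (max 0 ν + δ * s) * (u ⬝ᵥ u) := by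
  have hLn : ∀ v : Fin l → ℝ, nrm ((L - 1) *ᵥ v) ≤ δ * nrm v :=
    fun v => nrm_le_of_sq_le hδ0 _ v (hL v)
  have hRn : ∀ v : Fin l → ℝ, nrm ((R - 1) *ᵥ v) ≤ δ * nrm v :=
    fun v => nrm_le_of_sq_le hδ0 _ v (hR v)
  have hSn : ∀ v : Fin l → ℝ, nrm (S *ᵥ v) ≤ s * nrm v :=
    fun v => nrm_le_of_sq_le hs _ v (hS2 v)
  set w := R *ᵥ u with hw
  set z := S *ᵥ w with hz
  -- norm bounds
  have hwu : w = u + (R - 1) *ᵥ u := by rw [hw, sub_mulVec, one_mulVec]; ring_nf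
  have hnw : nrm w ≤ (1 + δ) * nrm u := by
    calc nrm w = nrm (u + (R - 1) *ᵥ u) := by rw [hwu]
      _ ≤ nrm u + nrm ((R - 1) *ᵥ u) := nrm_add_le _ _
      _ ≤ nrm u + δ * nrm u := by linarith [hRn u]
      _ = (1 + δ) * nrm u := by ring
  have hnz : nrm z ≤ s * ((1 + δ) * nrm u) :=
    (hSn w).trans (mul_le_mul_of_nonneg_left hnw hs)
  -- the transposed L vector
  set p := Lᵀ *ᵥ u with hp
  have hpw : nrm (p - w) ≤ 2 * δ * nrm u := by
    have h1 : p - w = (L - 1)ᵀ *ᵥ u - (R - 1) *ᵥ u := by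
      rw [hp, hwu, transpose_sub, transpose_one, sub_mulVec, one_mulVec, sub_mulVec, one_mulVec]
      abel
    have h2 : nrm ((L - 1)ᵀ *ᵥ u) ≤ δ * nrm u :=
      nrm_transpose_mulVec_le hδ0 hLn u
    calc nrm (p - w) = nrm ((L - 1)ᵀ *ᵥ u - (R - 1) *ᵥ u) := by rw [h1]
      _ ≤ nrm ((L - 1)ᵀ *ᵥ u) + nrm ((R - 1) *ᵥ u) := nrm_sub_le _ _
      _ ≤ δ * nrm u + δ * nrm u := add_le_add h2 (hRn u)
      _ = 2 * δ * nrm u := by ring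
  -- main decomposition
  have hdec : ((L * S * R) *ᵥ u) ⬝ᵥ u = z ⬝ᵥ w + z ⬝ᵥ (p - w) := by
    have : (L * S * R) *ᵥ u = L *ᵥ z := by
      rw [hz, hw, mulVec_mulVec, mulVec_mulVec]
    rw [this, dotProduct_comm, dotProduct_mulVec, ← mulVec_transpose, ← hp,
      dotProduct_comm, dotProduct_sub]
    ring
  have h1 : z ⬝ᵥ w ≤ ν * (w ⬝ᵥ w) := hν w
  have h2 : ν * (w ⬝ᵥ w) ≤ max 0 ν * (w ⬝ᵥ w) :=
    mul_le_mul_of_nonneg_right (le_max_right 0 ν) (dot_self_nonneg' w)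
  have h3 : w ⬝ᵥ w ≤ ((1 + δ) * nrm u) ^ 2 := by
    rw [← nrm_sq w]
    exact pow_le_pow_left₀ (nrm_nonneg w) hnw 2
  have h4 : z ⬝ᵥ (p - w) ≤ (s * ((1 + δ) * nrm u)) * (2 * δ * nrm u) := by
    calc z ⬝ᵥ (p - w) ≤ nrm z * nrm (p - w) := dot_le_nrm _ _
      _ ≤ (s * ((1 + δ) * nrm u)) * (2 * δ * nrm u) :=
        mul_le_mul hnz hpw (nrm_nonneg _) (mul_nonneg hs (mul_nonneg (by linarith) (nrm_nonneg u)))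
  have hu : u ⬝ᵥ u = nrm u ^ 2 := (nrm_sq u).symm
  have hmax : 0 ≤ max 0 ν := le_max_left 0 ν
  have hnu : 0 ≤ nrm u := nrm_nonneg u
  rw [hdec, hu]
  have h5 : (0 ⊔ ν) * (w ⬝ᵥ w) ≤ (0 ⊔ ν) * ((1 + δ) * nrm u) ^ 2 :=
    mul_le_mul_of_nonneg_left h3 hmax
  have hd2 : (1 + δ) ^ 2 ≤ 2 := by nlinarith
  have h6 : (0 ⊔ ν) * ((1 + δ) ^ 2 * nrm u ^ 2) ≤ (0 ⊔ ν) * (2 * nrm u ^ 2) :=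
    mul_le_mul_of_nonneg_left (mul_le_mul_of_nonneg_right hd2 (sq_nonneg (nrm u))) hmax
  have h7 : s * ((1 + δ) * nrm u) * (2 * δ * nrm u) ≤ 4 * (δ * s) * nrm u ^ 2 := by
    nlinarith [mul_nonneg (mul_nonneg hδ0 hs) (sq_nonneg (nrm u))]
  nlinarith [h5, h6, h7, mul_nonneg hmax (sq_nonneg (nrm u))]

-- complex helper lemmas
private lemma mapped_mulVec_re (M : Matrix (Fin l) (Fin l) ℝ) (v : Fin l → ℂ) (i : Fin l) :
    (((M.map (fun x => (x : ℂ))) *ᵥ v) i).re = (M *ᵥ (fun j => (v j).re)) i := by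
  simp [Matrix.mulVec, dotProduct, Complex.re_sum, Complex.mul_re]

private lemma mapped_mulVec_im (M : Matrix (Fin l) (Fin l) ℝ) (v : Fin l → ℂ) (i : Fin l) :
    (((M.map (fun x => (x : ℂ))) *ᵥ v) i).im = (M *ᵥ (fun j => (v j).im)) i := by
  simp [Matrix.mulVec, dotProduct, Complex.im_sum, Complex.mul_im]

end aux

/-- eigenvalue bound for near-identity twists of a symmetric matrix: there
is a constant `C > 0` (depending only on `l`) such that if `S` is real symmetric,
`‖L - I‖, ‖R - I‖ ≤ δ < 1/4`, `ν_max(S) ≤ ν` and `‖S‖ ≤ s`, then every (complex)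
eigenvalue `λ` of `L S R` satisfies `Re λ ≤ C (max{0, ν} + δ s)`. -/
theorem eigenvalue_real_part_bound (l : ℕ) :
    ∃ C > 0, ∀ (S L R : Matrix (Fin l) (Fin l) ℝ) (δ ν s : ℝ),
      S.IsSymm → 0 ≤ δ → δ < 1 / 4 → 0 ≤ s →
      (∀ v : Fin l → ℝ,
        ((L - 1).mulVec v) ⬝ᵥ ((L - 1).mulVec v) ≤ δ ^ 2 * (v ⬝ᵥ v)) →
      (∀ v : Fin l → ℝ,
        ((R - 1).mulVec v) ⬝ᵥ ((R - 1).mulVec v) ≤ δ ^ 2 * (v ⬝ᵥ v)) →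
      (∀ v : Fin l → ℝ, (S.mulVec v) ⬝ᵥ v ≤ ν * (v ⬝ᵥ v)) →
      (∀ v : Fin l → ℝ, (S.mulVec v) ⬝ᵥ (S.mulVec v) ≤ s ^ 2 * (v ⬝ᵥ v)) →
      ∀ (lam : ℂ) (v : Fin l → ℂ), v ≠ 0 →
        ((L * S * R).map (fun x => (x : ℂ))).mulVec v = lam • v →
        lam.re ≤ C * (max 0 ν + δ * s) := by
  refine ⟨4, by norm_num, ?_⟩
  intro S L R δ ν s _hSymm hδ0 hδ hs hL hR hν hS2 lam v hv heig
  set M := L * S * R with hM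
  set a : Fin l → ℝ := fun i => (v i).re with ha
  set b : Fin l → ℝ := fun i => (v i).im with hb
  set n : ℝ := a ⬝ᵥ a + b ⬝ᵥ b with hn
  have hns : n = ∑ i, Complex.normSq (v i) := by
    simp [hn, dotProduct, Complex.normSq_apply, Finset.sum_add_distrib, ha, hb]
  have hnpos : 0 < n := by
    obtain ⟨i, hi⟩ := Function.ne_iff.mp hv
    rw [hns]
    exact Finset.sum_pos' (fun j _ => Complex.normSq_nonneg _)
      ⟨i, Finset.mem_univ i, Complex.normSq_pos.mpr hi⟩
  have hvv : v ⬝ᵥ star v = (n : ℂ) := by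
    rw [hns]
    push_cast
    simp [dotProduct, Pi.star_apply, Complex.mul_conj]
  have hLHS : (((M.map (fun x => (x : ℂ))) *ᵥ v) ⬝ᵥ star v).re
      = (M *ᵥ a) ⬝ᵥ a + (M *ᵥ b) ⬝ᵥ b := by
    simp only [dotProduct, Complex.re_sum, Complex.mul_re, Pi.star_apply,
      RCLike.star_def, Complex.conj_re, Complex.conj_im]
    rw [← Finset.sum_add_distrib]
    refine Finset.sum_congr rfl fun i _ => ?_
    rw [mapped_mulVec_re, mapped_mulVec_im]
    ring
  have hRHS : (((lam • v) : Fin l → ℂ) ⬝ᵥ star v).re = lam.re * n := by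
    rw [smul_dotProduct, hvv, smul_eq_mul]
    simp [Complex.mul_re]
  have hkey : lam.re * n = (M *ᵥ a) ⬝ᵥ a + (M *ᵥ b) ⬝ᵥ b := by
    have h := congrArg (fun w => (w ⬝ᵥ star v).re) heig
    rw [← hRHS, ← h, hLHS]
  have hb1 := key_real S L R δ ν s hδ0 hδ hs hL hR hν hS2 a
  have hb2 := key_real S L R δ ν s hδ0 hδ hs hL hR hν hS2 b
  have : lam.re * n ≤ 4 * (max 0 ν + δ * s) * n := by
    rw [hkey, hn]; rw [← hM] at hb1 hb2; linarith
  exact le_of_mul_le_mul_right this hnpos
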